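/- Let n ≥ 1, let f, g : [n] → [n] be functions, and let σ be a permutation of [n] that minimizes d(f, σ) over all permutations of [n]. Then d(g∘f, id) ≥ max{ d(g, σ⁻¹) − d(f, σ), d(f, σ) } ≥ (1/2)·d(g, σ⁻¹), where d is the normalized Hamming distance between functions and id is the identity function. -/

import Mathlib

/-- Normalized Hamming distance between functions `[n] → [n]`. -/
noncomputable def nhdist {n : ℕ} {α : Type*} [DecidableEq α] (x y : Fin n → α) : ℝ :=
  (hammingDist x y : ℝ) / n

open Finset

/-- Extend a function injective on `p` to a permutation. -/
lemma exists_perm_agree {n : ℕ} (f : Fin n → Fin n) (p : Fin n → Prop) [DecidablePred p]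
    (hinj : ∀ i j, p i → p j → f i = f j → i = j) :
    ∃ τ : Equiv.Perm (Fin n), ∀ i, p i → τ i = f i := by
  classical
  set q : Fin n → Prop := fun x => ∃ i, p i ∧ f i = x with hq
  have hbij : Function.Bijective
      (fun i : {i // p i} => (⟨f i, i, i.2, rfl⟩ : {x // q x})) := by
    constructor
    · rintro ⟨i, hi⟩ ⟨j, hj⟩ h
      simpa using hinj i j hi hj (by simpa using h)
    · rintro ⟨x, i, hi, rfl⟩
      exact ⟨⟨i, hi⟩, rfl⟩
  obtain ⟨e1, he1⟩ : ∃ e : { i // p i } ≃ { x // q x }, ∀ i, (e i : Fin n) = f i :=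
    ⟨Equiv.ofBijective _ hbij, fun i => rfl⟩
  have hcard : Fintype.card { x // ¬ p x } = Fintype.card { x // ¬ q x } := by
    rw [Fintype.card_subtype_compl, Fintype.card_subtype_compl,
      Fintype.card_congr e1]
  have e2 : { x // ¬ p x } ≃ { x // ¬ q x } := Fintype.equivOfCardEq hcard
  refine ⟨(Equiv.sumCompl p).symm.trans ((Equiv.sumCongr e1 e2).trans (Equiv.sumCompl q)),
    fun i hi => ?_⟩
  have h1 : ((Equiv.sumCompl p).symm i) = Sum.inl ⟨i, hi⟩ :=
    Equiv.sumCompl_symm_apply_of_pos (p := p) hi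
  simp only [Equiv.trans_apply, h1, Equiv.sumCongr_apply, Sum.map_inl,
    Equiv.sumCompl_apply_inl]
  exact he1 ⟨i, hi⟩

theorem dist_comp_id_ge_half (n : ℕ) (hn : 1 ≤ n) (f g : Fin n → Fin n)
    (σ : Equiv.Perm (Fin n))
    (hσ : ∀ τ : Equiv.Perm (Fin n), nhdist f ⇑σ ≤ nhdist f ⇑τ) :
    max (nhdist g ⇑σ.symm - nhdist f ⇑σ) (nhdist f ⇑σ) ≤ nhdist (fun i => g (f i)) id ∧
    (1 / 2) * nhdist g ⇑σ.symm
      ≤ max (nhdist g ⇑σ.symm - nhdist f ⇑σ) (nhdist f ⇑σ) := by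
  classical
  have hn0 : (0:ℝ) < n := by exact_mod_cast hn
  -- Claim A : nhdist f σ ≤ nhdist (g∘f) id
  have claimA : nhdist f ⇑σ ≤ nhdist (fun i => g (f i)) id := by
    obtain ⟨τ, hτ⟩ := exists_perm_agree f (fun i => g (f i) = i)
      (fun i j hi hj h => by rw [← hi, ← hj, h])
    refine (hσ τ).trans ?_
    unfold nhdist
    apply div_le_div_of_nonneg_right ?_ hn0.le
    have : hammingDist f ⇑τ ≤ hammingDist (fun i => g (f i)) id := by
      unfold hammingDist
      apply card_le_card
      intro i hi
      simp only [mem_filter, mem_univ, true_and] at hi ⊢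
      intro h
      exact hi ((hτ i h).symm)
    exact_mod_cast this
  -- Claim B : nhdist g σ⁻¹ ≤ nhdist f σ + nhdist (g∘f) id
  have claimB : nhdist g ⇑σ.symm ≤ nhdist f ⇑σ + nhdist (fun i => g (f i)) id := by
    unfold nhdist
    rw [← add_div]
    apply div_le_div_of_nonneg_right ?_ hn0.le
    have hnat : hammingDist g ⇑σ.symm
        ≤ hammingDist f ⇑σ + hammingDist (fun i => g (f i)) id := by
      unfold hammingDist
      set A : Finset (Fin n) := univ.filter (fun i => f i ≠ σ i) with hA
      set B : Finset (Fin n) := univ.filter (fun i => (fun i => g (f i)) i ≠ id i) with hB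
      calc (univ.filter (fun x => g x ≠ σ.symm x)).card
          ≤ ((A ∪ B).image σ).card := by
            apply card_le_card
            intro x hx
            rw [mem_filter] at hx
            rw [mem_image]
            refine ⟨σ.symm x, ?_, by simp⟩
            rw [mem_union, hA, hB, mem_filter, mem_filter]
            by_contra hcon
            push_neg at hcon
            obtain ⟨h1, h2⟩ := hcon
            have h1' := h1 (mem_univ _)
            have h2' := h2 (mem_univ _)
            simp only [id_eq] at h2'
            rw [Equiv.apply_symm_apply] at h1'
            rw [h1'] at h2'
            exact hx.2 h2'
        _ ≤ (A ∪ B).card := card_image_le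
        _ ≤ A.card + B.card := card_union_le _ _
    exact_mod_cast hnat
  constructor
  · apply max_le
    · linarith
    · exact claimA
  · rcases le_or_gt (nhdist g ⇑σ.symm - nhdist f ⇑σ) (nhdist f ⇑σ) with h | h
    · rw [max_eq_right h]; linarith
    · rw [max_eq_left h.le]; linarith
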